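/- For every integer d ≥ 2, the map Φ : S^{d-2} → SC_d(2,0;o) defined by Φ(x) = ((x/2 + P_{1/4}, 1/4), (−x/2 + P_{1/4}, 1/4)) is well defined (both balls are contained in the closed upper unit semiball and are nonoverlapping), is a topological embedding, satisfies π_c(Φ(x)) = x for all x ∈ S^{d-2}, and is invariant under swapping the two balls followed by applying R_{d-1} to both centers: for all x ∈ S^{d-2}, ((R_{d-1}(−x/2 + P_{1/4}), 1/4), (R_{d-1}(x/2 + P_{1/4}), 1/4)) = Φ(x). -/

import Mathlib

noncomputable section

/-- The last index of `Fin d` (corresponding to the last coordinate `x_d`). -/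
def lastIdx (d : ℕ) (hd : 2 ≤ d) : Fin d := ⟨d - 1, by omega⟩

/-- The point `P_{1/4} = (0, …, 0, 1/4)` of `ℝ^d`. -/
def Pquarter (d : ℕ) (hd : 2 ≤ d) : EuclideanSpace ℝ (Fin d) :=
  EuclideanSpace.single (lastIdx d hd) 4⁻¹

/-- The composite `R_{d-1}` of the reflections `r_1, …, r_{d-1}`, i.e. the map negating
the first `d − 1` coordinates and keeping the last one. -/
def bigR (d : ℕ) (hd : 2 ≤ d) :
    EuclideanSpace ℝ (Fin d) → EuclideanSpace ℝ (Fin d) :=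
  fun x => -x + EuclideanSpace.single (lastIdx d hd) (2 * x (lastIdx d hd))

/-- The configuration space `SC_d(2,0;o)` of two nonoverlapping balls in the closed
upper unit semiball of `ℝ^d`. -/
def SC20o (d : ℕ) (hd : 2 ≤ d) :
    Set ((EuclideanSpace ℝ (Fin d) × ℝ) × (EuclideanSpace ℝ (Fin d) × ℝ)) :=
  {c | 0 < c.1.2 ∧ 0 < c.2.2 ∧
       c.1.1 (lastIdx d hd) ≥ c.1.2 ∧ c.2.1 (lastIdx d hd) ≥ c.2.2 ∧
       ‖c.1.1‖ + c.1.2 ≤ 1 ∧ ‖c.2.1‖ + c.2.2 ≤ 1 ∧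
       ‖c.1.1 - c.2.1‖ ≥ c.1.2 + c.2.2}

/-- The sphere `S^{d-2} = {z ∈ S^{d-1} : z_d = 0}` inside `ℝ^d`. -/
def sphereLast (d : ℕ) (hd : 2 ≤ d) : Set (EuclideanSpace ℝ (Fin d)) :=
  {z | ‖z‖ = 1 ∧ z (lastIdx d hd) = 0}

/-- The raw formula of the projection `π_c`, sending `((x,r),(y,s))` to `(x−y)/‖x−y‖`. -/
def rawPi (d : ℕ) :
    (EuclideanSpace ℝ (Fin d) × ℝ) × (EuclideanSpace ℝ (Fin d) × ℝ) →
      EuclideanSpace ℝ (Fin d) :=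
  fun c => ‖c.1.1 - c.2.1‖⁻¹ • (c.1.1 - c.2.1)

/-- The raw formula of `Φ = φ_o(f,f)`, sending `x` to
`((x/2 + P_{1/4}, 1/4), (−x/2 + P_{1/4}, 1/4))`. -/
def bigPhi (d : ℕ) (hd : 2 ≤ d) :
    EuclideanSpace ℝ (Fin d) →
      (EuclideanSpace ℝ (Fin d) × ℝ) × (EuclideanSpace ℝ (Fin d) × ℝ) :=
  fun x =>
    (((2 : ℝ)⁻¹ • x + Pquarter d hd, 4⁻¹), (-((2 : ℝ)⁻¹ • x) + Pquarter d hd, 4⁻¹))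

/-- For every integer `d ≥ 2`, the map `Φ : S^{d-2} → SC_d(2,0;o)`,
`x ↦ ((x/2 + P_{1/4}, 1/4), (−x/2 + P_{1/4}, 1/4))`, is well defined, is a topological
embedding, satisfies `π_c(Φ(x)) = x`, and is invariant under swapping the two balls
followed by applying `R_{d-1}` to both centers. -/
theorem swissCheese_bigPhi_embedding_invariant (d : ℕ) (hd : 2 ≤ d) :
    (∀ x ∈ sphereLast d hd, bigPhi d hd x ∈ SC20o d hd) ∧
    Topology.IsEmbedding (fun x : sphereLast d hd => bigPhi d hd x.1) ∧
    (∀ x ∈ sphereLast d hd, rawPi d (bigPhi d hd x) = x) ∧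
    (∀ x ∈ sphereLast d hd,
      ((bigR d hd (-((2 : ℝ)⁻¹ • x) + Pquarter d hd), (4⁻¹ : ℝ)),
       (bigR d hd ((2 : ℝ)⁻¹ • x + Pquarter d hd), (4⁻¹ : ℝ))) = bigPhi d hd x) := by

  have hdiff : ∀ x : EuclideanSpace ℝ (Fin d),
      ((2 : ℝ)⁻¹ • x + Pquarter d hd) - (-((2 : ℝ)⁻¹ • x) + Pquarter d hd) = x := by
    intro x
    have : (2 : ℝ)⁻¹ + 2⁻¹ = 1 := by norm_num
    rw [show ((2 : ℝ)⁻¹ • x + Pquarter d hd) - (-((2 : ℝ)⁻¹ • x) + Pquarter d hd)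
        = ((2 : ℝ)⁻¹ + 2⁻¹) • x by module, this, one_smul]
  have hP : ‖Pquarter d hd‖ = 4⁻¹ := by
    rw [Pquarter, EuclideanSpace.norm_single]; norm_num
  have hwd : ∀ x ∈ sphereLast d hd, bigPhi d hd x ∈ SC20o d hd := by
    intro x hx
    obtain ⟨hx1, hx0⟩ := hx
    have hlast : ∀ c : ℝ, (c • x + Pquarter d hd) (lastIdx d hd) = 4⁻¹ := by
      intro c
      rw [PiLp.add_apply, PiLp.smul_apply, Pquarter, EuclideanSpace.single_apply]
      simp [hx0]
    have hnrm : ∀ c : ℝ, |c| = 2⁻¹ → ‖c • x + Pquarter d hd‖ + 4⁻¹ ≤ 1 := by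
      intro c hc
      have := norm_add_le (c • x) (Pquarter d hd)
      rw [norm_smul, hx1, hP] at this
      simp only [Real.norm_eq_abs, hc, mul_one] at this
      linarith
    simp only [SC20o, bigPhi, Set.mem_setOf_eq]
    refine ⟨by norm_num, by norm_num, ?_, ?_, ?_, ?_, ?_⟩
    · rw [ge_iff_le, hlast]
    · rw [show -((2:ℝ)⁻¹ • x) + Pquarter d hd = (-2⁻¹:ℝ) • x + Pquarter d hd by
        rw [neg_smul], ge_iff_le, hlast]
    · exact hnrm 2⁻¹ (by norm_num)
    · rw [show -((2:ℝ)⁻¹ • x) + Pquarter d hd = (-2⁻¹:ℝ) • x + Pquarter d hd by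
        rw [neg_smul]]
      exact hnrm (-2⁻¹) (by norm_num)
    · rw [hdiff, hx1]; norm_num
  refine ⟨hwd, ?_, ?_, ?_⟩
  · have hclosed : IsClosed (sphereLast d hd) := by
      have : sphereLast d hd =
          (fun z : EuclideanSpace ℝ (Fin d) => ‖z‖) ⁻¹' {1} ∩
          (fun z : EuclideanSpace ℝ (Fin d) => z (lastIdx d hd)) ⁻¹' {0} := by
        ext z; simp [sphereLast]
      rw [this]
      exact (isClosed_singleton.preimage continuous_norm).inter
        (isClosed_singleton.preimage (PiLp.continuous_apply 2 _ _))
    have hbdd : IsCompact (sphereLast d hd) := by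
      apply Metric.isCompact_of_isClosed_isBounded hclosed
      apply Bornology.IsBounded.subset (Metric.isBounded_closedBall (x := 0) (r := 1))
      intro z hz
      simp [Metric.mem_closedBall, dist_zero_right, hz.1.le]
    haveI : CompactSpace (sphereLast d hd) := isCompact_iff_compactSpace.mp hbdd
    apply Topology.IsClosedEmbedding.isEmbedding
    apply Continuous.isClosedEmbedding
    · unfold bigPhi
      fun_prop
    · intro a b hab
      have h1 : (2:ℝ)⁻¹ • a.1 + Pquarter d hd = (2:ℝ)⁻¹ • b.1 + Pquarter d hd :=
        congrArg (fun c => c.1.1) hab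
      have : a.1 = b.1 := by
        have := add_right_cancel h1
        have h2 := congrArg (fun y => (2:ℝ) • y) this
        simpa [smul_smul] using h2
      exact Subtype.ext this
  · intro x hx
    unfold rawPi
    rw [show (bigPhi d hd x).1.1 - (bigPhi d hd x).2.1
        = ((2 : ℝ)⁻¹ • x + Pquarter d hd) - (-((2 : ℝ)⁻¹ • x) + Pquarter d hd) from rfl,
      hdiff, hx.1]
    simp
  · intro x hx
    have hlast : ∀ c : ℝ, (c • x + Pquarter d hd) (lastIdx d hd) = 4⁻¹ := by
      intro c
      rw [PiLp.add_apply, PiLp.smul_apply, Pquarter, EuclideanSpace.single_apply]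
      simp [hx.2]
    have hsingle : EuclideanSpace.single (lastIdx d hd) ((2:ℝ) * 4⁻¹)
        = (2:ℝ) • Pquarter d hd := by
      ext j
      rw [PiLp.smul_apply, Pquarter, EuclideanSpace.single_apply, EuclideanSpace.single_apply]
      split <;> simp
    have hR : ∀ c : ℝ, bigR d hd (c • x + Pquarter d hd) = (-c) • x + Pquarter d hd := by
      intro c
      unfold bigR
      rw [hlast, hsingle]
      module
    unfold bigPhi
    refine Prod.ext (Prod.ext ?_ rfl) (Prod.ext ?_ rfl)
    · show bigR d hd (-((2:ℝ)⁻¹ • x) + Pquarter d hd) = _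
      rw [show -((2:ℝ)⁻¹ • x) = (-2⁻¹ : ℝ) • x by module, hR]
      module
    · show bigR d hd ((2:ℝ)⁻¹ • x + Pquarter d hd) = _
      rw [show ((2:ℝ)⁻¹ • x) = ((2:ℝ)⁻¹ : ℝ) • x from rfl, hR]
      module
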